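/- Let K be a field, n ≥ 1, I ⊆ [n-1], and A ∈ ASM^I(n). Then X_A = { Z ∈ Mat_{n×n}(K) : rank(Z_{[i],[j]}) ≤ r_A(i,j) for all i ∈ [n]∖I and all j ∈ [n] }; that is, the rank conditions in rows indexed by I are implied by the remaining ones. -/

import Mathlib

/-- The rank (corner sum) matrix entry `r_A(i,j)` (1-based `i j`, zero when `i = 0` or `j = 0`). -/
def rk (n : ℕ) (A : Matrix (Fin n) (Fin n) ℤ) (i j : ℕ) : ℤ :=
  ∑ p : Fin n, ∑ q : Fin n, if p.1 < i ∧ q.1 < j then A p q else 0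

/-- `A` is an alternating sign matrix: entries in `{-1,0,1}`, the nonzero entries of each row
and column alternate in sign and sum to `1`; equivalently all partial row and column sums are
`0` or `1` and every full row and column sums to `1`. -/
def IsASM (n : ℕ) (A : Matrix (Fin n) (Fin n) ℤ) : Prop :=
  (∀ i j, A i j = -1 ∨ A i j = 0 ∨ A i j = 1) ∧
  (∀ i : Fin n, ∀ j : ℕ, j ≤ n →
      (∑ q : Fin n, if q.1 < j then A i q else 0) = 0 ∨
      (∑ q : Fin n, if q.1 < j then A i q else 0) = 1) ∧
  (∀ j : Fin n, ∀ i : ℕ, i ≤ n →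
      (∑ p : Fin n, if p.1 < i then A p j else 0) = 0 ∨
      (∑ p : Fin n, if p.1 < i then A p j else 0) = 1) ∧
  (∀ i : Fin n, (∑ q : Fin n, A i q) = 1) ∧
  (∀ j : Fin n, (∑ p : Fin n, A p j) = 1)

/-- `A ∈ ASM^I(n)`: `A` is an ASM and for every `i ∈ I` and `j ∈ [n]`,
`r_A(i,j) = r_A(i-1,j) + 1` or `r_A(i,j) = r_A(i+1,j)`. -/
def InASMI (n : ℕ) (I : Finset ℕ) (A : Matrix (Fin n) (Fin n) ℤ) : Prop :=
  IsASM n A ∧ ∀ i ∈ I, ∀ j, 1 ≤ j → j ≤ n →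
    rk n A i j = rk n A (i - 1) j + 1 ∨ rk n A i j = rk n A (i + 1) j

/-- Bruhat order on `ASM(n)`: `A ≤ B` iff `r_A(i,j) ≥ r_B(i,j)` for all `i,j ∈ [n]`. -/
def blE (n : ℕ) (A B : Matrix (Fin n) (Fin n) ℤ) : Prop :=
  ∀ i j, 1 ≤ i → i ≤ n → 1 ≤ j → j ≤ n → rk n B i j ≤ rk n A i j

/-- Permutation matrix of `w`. -/
def permMatrix (n : ℕ) (w : Equiv.Perm (Fin n)) : Matrix (Fin n) (Fin n) ℤ :=
  Matrix.of fun i j => if w i = j then 1 else 0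

/-- `w ∈ S_n^I`: `w(i) < w(i+1)` for all `i ∈ I` (indices 1-based). -/
def IsMinRep (n : ℕ) (I : Finset ℕ) (w : Equiv.Perm (Fin n)) : Prop :=
  ∀ p q : Fin n, (p.1 + 1) ∈ I → q.1 = p.1 + 1 → w p < w q

/-- Identity matrix. -/
def idMat (n : ℕ) : Matrix (Fin n) (Fin n) ℤ :=
  Matrix.of fun i j => if i = j then 1 else 0

/-- Rank of the top-left `i × j` submatrix of `Z` (for `i, j ≤ n`). -/
noncomputable def tlRank {K : Type*} [Field K] (n : ℕ) (Z : Matrix (Fin n) (Fin n) K)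
    (i j : ℕ) : ℕ :=
  (Matrix.of fun (p : Fin i) (q : Fin j) =>
      if h : p.1 < n ∧ q.1 < n then Z ⟨p.1, h.1⟩ ⟨q.1, h.2⟩ else 0).rank

/-- Membership in the ASM variety `X_A`: all top-left ranks of `Z` are bounded by `r_A`. -/
def memX {K : Type*} [Field K] (n : ℕ) (A : Matrix (Fin n) (Fin n) ℤ)
    (Z : Matrix (Fin n) (Fin n) K) : Prop :=
  ∀ i j, 1 ≤ i → i ≤ n → 1 ≤ j → j ≤ n → (tlRank n Z i j : ℤ) ≤ rk n A i j

section Aux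

open Module Submodule

variable {K : Type*} [Field K]

lemma rank_eq_rows {a b : ℕ} (M : Matrix (Fin a) (Fin b) K) :
    M.rank = Module.finrank K (Submodule.span K (Set.range M)) := by
  rw [← Matrix.rank_transpose, Matrix.rank_eq_finrank_span_cols]
  rfl

lemma tlRank_mono (n : ℕ) (Z : Matrix (Fin n) (Fin n) K) {i i' : ℕ} (j : ℕ) (h : i ≤ i') :
    tlRank n Z i j ≤ tlRank n Z i' j := by
  unfold tlRank
  rw [rank_eq_rows, rank_eq_rows]
  apply Submodule.finrank_mono
  apply Submodule.span_mono
  rintro _ ⟨p, rfl⟩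
  exact ⟨⟨p.1, lt_of_lt_of_le p.2 h⟩, rfl⟩

lemma tlRank_succ_le (n : ℕ) (Z : Matrix (Fin n) (Fin n) K) (i j : ℕ) :
    tlRank n Z (i + 1) j ≤ tlRank n Z i j + 1 := by
  unfold tlRank
  rw [rank_eq_rows, rank_eq_rows]
  set v : Fin j → K := fun q => if h : i < n ∧ q.1 < n then Z ⟨i, h.1⟩ ⟨q.1, h.2⟩ else 0 with hv
  have hsub : Set.range (Matrix.of fun (p : Fin (i+1)) (q : Fin j) =>
      if h : p.1 < n ∧ q.1 < n then Z ⟨p.1, h.1⟩ ⟨q.1, h.2⟩ else 0) ⊆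
      Set.range (Matrix.of fun (p : Fin i) (q : Fin j) =>
      if h : p.1 < n ∧ q.1 < n then Z ⟨p.1, h.1⟩ ⟨q.1, h.2⟩ else 0) ∪ {v} := by
    rintro _ ⟨p, rfl⟩
    by_cases hp : p.1 < i
    · exact Or.inl ⟨⟨p.1, hp⟩, rfl⟩
    · right
      have hp' : p.1 = i := by omega
      simp only [Set.mem_singleton_iff]
      funext q
      simp only [Matrix.of_apply, hp', hv]
  calc Module.finrank K (Submodule.span K (Set.range (Matrix.of fun (p : Fin (i+1)) (q : Fin j) =>
      if h : p.1 < n ∧ q.1 < n then Z ⟨p.1, h.1⟩ ⟨q.1, h.2⟩ else 0)))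
      ≤ Module.finrank K (Submodule.span K ((Set.range (Matrix.of fun (p : Fin i) (q : Fin j) =>
        if h : p.1 < n ∧ q.1 < n then Z ⟨p.1, h.1⟩ ⟨q.1, h.2⟩ else 0)) ∪ {v})) :=
        Submodule.finrank_mono (Submodule.span_mono hsub)
    _ ≤ _ := by
        rw [Submodule.span_union]
        refine le_trans (Submodule.finrank_add_le_finrank_add_finrank _ _) ?_
        gcongr
        by_cases hv0 : v = 0
        · rw [hv0, Submodule.span_zero_singleton, finrank_bot]
          omega
        · exact le_of_eq (finrank_span_singleton hv0)

lemma tlRank_zero (n : ℕ) (Z : Matrix (Fin n) (Fin n) K) (j : ℕ) :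
    tlRank n Z 0 j = 0 := by
  have := Matrix.rank_le_card_height (Matrix.of fun (p : Fin 0) (q : Fin j) =>
      if h : p.1 < n ∧ q.1 < n then Z ⟨p.1, h.1⟩ ⟨q.1, h.2⟩ else 0)
  simpa [tlRank] using this

lemma rk_zero (n : ℕ) (A : Matrix (Fin n) (Fin n) ℤ) (j : ℕ) : rk n A 0 j = 0 := by
  simp [rk]

end Aux

/-- For `A ∈ ASM^I(n)`, membership in `X_A` is equivalent to the rank conditions in the rows
outside `I`: the rank conditions in rows indexed by `I` are implied by the remaining ones. -/
theorem stmt7 (K : Type*) [Field K] (n : ℕ) (hn : 1 ≤ n)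
    (I : Finset ℕ) (hI : I ⊆ Finset.Icc 1 (n - 1))
    (A : Matrix (Fin n) (Fin n) ℤ) (hA : InASMI n I A)
    (Z : Matrix (Fin n) (Fin n) K) :
    memX n A Z ↔
      ∀ i, 1 ≤ i → i ≤ n → i ∉ I → ∀ j, 1 ≤ j → j ≤ n →
        (tlRank n Z i j : ℤ) ≤ rk n A i j := by
  constructor
  · intro h i h1 h2 _ j hj1 hj2
    exact h i j h1 h2 hj1 hj2
  · intro H
    -- downward chains
    have down : ∀ i, i ∈ I → ∀ j, 1 ≤ j → j ≤ n →
        rk n A i j = rk n A (i - 1) j + 1 → (tlRank n Z i j : ℤ) ≤ rk n A i j := by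
      intro i
      induction i using Nat.strong_induction_on with
      | _ i ih =>
        intro hiI j hj1 hj2 hrk
        obtain ⟨h1, h2⟩ := Finset.mem_Icc.mp (hI hiI)
        have hstep : tlRank n Z i j ≤ tlRank n Z (i - 1) j + 1 := by
          have := tlRank_succ_le n Z (i - 1) j
          rwa [show i - 1 + 1 = i by omega] at this
        have hprev : (tlRank n Z (i - 1) j : ℤ) ≤ rk n A (i - 1) j := by
          by_cases hi1 : i = 1
          · rw [hi1]
            simp [tlRank_zero, rk_zero]
          · by_cases hmem : (i - 1) ∈ I
            · rcases hA.2 (i - 1) hmem j hj1 hj2 with hd | hu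
              · exact ih (i - 1) (by omega) hmem j hj1 hj2 hd
              · exfalso
                rw [show i - 1 + 1 = i by omega] at hu
                rw [hu] at hrk
                linarith
            · exact H (i - 1) (by omega) (by omega) hmem j hj1 hj2
        calc (tlRank n Z i j : ℤ) ≤ (tlRank n Z (i - 1) j : ℤ) + 1 := by exact_mod_cast hstep
          _ ≤ rk n A (i - 1) j + 1 := by linarith
          _ = rk n A i j := hrk.symm
    have up : ∀ d i, n - i ≤ d → 1 ≤ i → i ≤ n → ∀ j, 1 ≤ j → j ≤ n →
        (tlRank n Z i j : ℤ) ≤ rk n A i j := by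
      intro d
      induction d with
      | zero =>
        intro i hd h1 h2 j hj1 hj2
        have hi : i = n := by omega
        have hiI : i ∉ I := by
          intro hmem
          have := (Finset.mem_Icc.mp (hI hmem)).2
          omega
        exact H i h1 h2 hiI j hj1 hj2
      | succ d ihd =>
        intro i hd h1 h2 j hj1 hj2
        by_cases hiI : i ∈ I
        · obtain ⟨hl, hr⟩ := Finset.mem_Icc.mp (hI hiI)
          rcases hA.2 i hiI j hj1 hj2 with hdn | hup
          · exact down i hiI j hj1 hj2 hdn
          · have hmono : tlRank n Z i j ≤ tlRank n Z (i + 1) j :=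
              tlRank_mono n Z j (Nat.le_succ i)
            have hnext : (tlRank n Z (i + 1) j : ℤ) ≤ rk n A (i + 1) j :=
              ihd (i + 1) (by omega) (by omega) (by omega) j hj1 hj2
            rw [hup]
            calc (tlRank n Z i j : ℤ) ≤ (tlRank n Z (i + 1) j : ℤ) := by exact_mod_cast hmono
              _ ≤ rk n A (i + 1) j := hnext
        · exact H i h1 h2 hiI j hj1 hj2
    intro i j h1 h2 hj1 hj2
    exact up (n - i) i le_rfl h1 h2 j hj1 hj2
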